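/- Let 𝔥 be a real Lie subalgebra of sl(2,ℂ), the complex trace-zero 2×2 matrices regarded as a 6-dimensional real Lie algebra, with dim_ℝ 𝔥 ≥ 2. Then there exists a solvable real Lie subalgebra 𝔯 of sl(2,ℂ) with 𝔥 + 𝔯 = sl(2,ℂ). -/

import Mathlib

open LieAlgebra.SpecialLinear Complex

/-- A complex Lie algebra is also a real Lie algebra by restriction of scalars. -/
noncomputable instance lieAlgebraComplexToReal (L : Type*) [LieRing L] [LieAlgebra ℂ L] :
    LieAlgebra ℝ L where
  lie_smul r x y := lie_smul (r : ℂ) x y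


open Complex

private lemma conj_poly_key (p0 p1 p2 q0 q1 q2 : ℂ)
    (H : ∀ c : ℂ, (starRingEnd ℂ) (p0 + p1*c + p2*(c*c)) * (q0 + q1*c + q2*(c*c))
        = (p0 + p1*c + p2*(c*c)) * (starRingEnd ℂ) (q0 + q1*c + q2*(c*c))) :
    ((starRingEnd ℂ) p0 * q0 = p0 * (starRingEnd ℂ) q0) ∧
    ((starRingEnd ℂ) p0 * q1 = p1 * (starRingEnd ℂ) q0) ∧
    ((starRingEnd ℂ) p0 * q2 = p2 * (starRingEnd ℂ) q0) ∧
    ((starRingEnd ℂ) p1 * q0 = p0 * (starRingEnd ℂ) q1) ∧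
    ((starRingEnd ℂ) p1 * q1 = p1 * (starRingEnd ℂ) q1) ∧
    ((starRingEnd ℂ) p1 * q2 = p2 * (starRingEnd ℂ) q1) ∧
    ((starRingEnd ℂ) p2 * q0 = p0 * (starRingEnd ℂ) q2) ∧
    ((starRingEnd ℂ) p2 * q1 = p1 * (starRingEnd ℂ) q2) ∧
    ((starRingEnd ℂ) p2 * q2 = p2 * (starRingEnd ℂ) q2) := by
  have v0 := congrArg Complex.im (H 0)
  have v1 := congrArg Complex.im (H 1)
  have vm1 := congrArg Complex.im (H (-1))
  have v2 := congrArg Complex.im (H 2)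
  have vm2 := congrArg Complex.im (H (-2))
  have vi := congrArg Complex.im (H I)
  have vmi := congrArg Complex.im (H (-I))
  have v2i := congrArg Complex.im (H (2*I))
  have vii := congrArg Complex.im (H (1+I))
  simp only [map_add, map_mul, map_neg, map_one, map_zero, map_ofNat, Complex.conj_I,
    Complex.add_im, Complex.add_re, Complex.mul_im, Complex.mul_re, Complex.conj_re,
    Complex.conj_im, Complex.I_re, Complex.I_im, Complex.neg_re, Complex.neg_im,
    Complex.one_re, Complex.one_im, Complex.zero_re, Complex.zero_im,
    Complex.re_ofNat, Complex.im_ofNat] at v0 v1 vm1 v2 vm2 vi vmi v2i vii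
  refine ⟨?_, ?_, ?_, ?_, ?_, ?_, ?_, ?_, ?_⟩
  · refine Complex.ext ?_ ?_ <;>
      simp only [Complex.add_im, Complex.add_re, Complex.mul_im, Complex.mul_re, Complex.conj_re,
        Complex.conj_im]
    · linear_combination (0 : ℝ) * v0
    · linear_combination (1 : ℝ) * v0
  · refine Complex.ext ?_ ?_ <;>
      simp only [Complex.add_im, Complex.add_re, Complex.mul_im, Complex.mul_re, Complex.conj_re,
        Complex.conj_im]
    · linear_combination (-1/6 : ℝ) * v1 + (-1/6 : ℝ) * vm1 + (1/24 : ℝ) * v2 + (1/24 : ℝ) * vm2 + (1/2 : ℝ) * vi + (-1/6 : ℝ) * vmi + (-1/12 : ℝ) * v2i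
    · linear_combination (1/3 : ℝ) * v1 + (-1/3 : ℝ) * vm1 + (-1/24 : ℝ) * v2 + (1/24 : ℝ) * vm2
  · refine Complex.ext ?_ ?_ <;>
      simp only [Complex.add_im, Complex.add_re, Complex.mul_im, Complex.mul_re, Complex.conj_re,
        Complex.conj_im]
    · linear_combination (1/8 : ℝ) * v0 + (-5/24 : ℝ) * v1 + (-1/24 : ℝ) * vm1 + (-1/48 : ℝ) * v2 + (1/48 : ℝ) * vm2 + (-1/8 : ℝ) * vi + (1/24 : ℝ) * vmi + (-1/24 : ℝ) * v2i + (1/4 : ℝ) * vii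
    · linear_combination (1/8 : ℝ) * v1 + (1/8 : ℝ) * vm1 + (-1/8 : ℝ) * vi + (-1/8 : ℝ) * vmi
  · refine Complex.ext ?_ ?_ <;>
      simp only [Complex.add_im, Complex.add_re, Complex.mul_im, Complex.mul_re, Complex.conj_re,
        Complex.conj_im]
    · linear_combination (1/6 : ℝ) * v1 + (1/6 : ℝ) * vm1 + (-1/24 : ℝ) * v2 + (-1/24 : ℝ) * vm2 + (-1/2 : ℝ) * vi + (1/6 : ℝ) * vmi + (1/12 : ℝ) * v2i
    · linear_combination (1/3 : ℝ) * v1 + (-1/3 : ℝ) * vm1 + (-1/24 : ℝ) * v2 + (1/24 : ℝ) * vm2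
  · refine Complex.ext ?_ ?_ <;>
      simp only [Complex.add_im, Complex.add_re, Complex.mul_im, Complex.mul_re, Complex.conj_re,
        Complex.conj_im]
    · linear_combination (0 : ℝ) * v0
    · linear_combination (-5/4 : ℝ) * v0 + (5/12 : ℝ) * v1 + (5/12 : ℝ) * vm1 + (-1/24 : ℝ) * v2 + (-1/24 : ℝ) * vm2 + (1/4 : ℝ) * vi + (1/4 : ℝ) * vmi
  · refine Complex.ext ?_ ?_ <;>
      simp only [Complex.add_im, Complex.add_re, Complex.mul_im, Complex.mul_re, Complex.conj_re,
        Complex.conj_im]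
    · linear_combination (1/6 : ℝ) * v1 + (1/6 : ℝ) * vm1 + (-1/24 : ℝ) * v2 + (-1/24 : ℝ) * vm2 + (-1/4 : ℝ) * vi + (-1/12 : ℝ) * vmi + (1/12 : ℝ) * v2i
    · linear_combination (-1/12 : ℝ) * v1 + (1/12 : ℝ) * vm1 + (1/24 : ℝ) * v2 + (-1/24 : ℝ) * vm2
  · refine Complex.ext ?_ ?_ <;>
      simp only [Complex.add_im, Complex.add_re, Complex.mul_im, Complex.mul_re, Complex.conj_re,
        Complex.conj_im]
    · linear_combination (-1/8 : ℝ) * v0 + (5/24 : ℝ) * v1 + (1/24 : ℝ) * vm1 + (1/48 : ℝ) * v2 + (-1/48 : ℝ) * vm2 + (1/8 : ℝ) * vi + (-1/24 : ℝ) * vmi + (1/24 : ℝ) * v2i + (-1/4 : ℝ) * vii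
    · linear_combination (1/8 : ℝ) * v1 + (1/8 : ℝ) * vm1 + (-1/8 : ℝ) * vi + (-1/8 : ℝ) * vmi
  · refine Complex.ext ?_ ?_ <;>
      simp only [Complex.add_im, Complex.add_re, Complex.mul_im, Complex.mul_re, Complex.conj_re,
        Complex.conj_im]
    · linear_combination (-1/6 : ℝ) * v1 + (-1/6 : ℝ) * vm1 + (1/24 : ℝ) * v2 + (1/24 : ℝ) * vm2 + (1/4 : ℝ) * vi + (1/12 : ℝ) * vmi + (-1/12 : ℝ) * v2i
    · linear_combination (-1/12 : ℝ) * v1 + (1/12 : ℝ) * vm1 + (1/24 : ℝ) * v2 + (-1/24 : ℝ) * vm2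
  · refine Complex.ext ?_ ?_ <;>
      simp only [Complex.add_im, Complex.add_re, Complex.mul_im, Complex.mul_re, Complex.conj_re,
        Complex.conj_im]
    · linear_combination (0 : ℝ) * v0
    · linear_combination (1/4 : ℝ) * v0 + (-1/6 : ℝ) * v1 + (-1/6 : ℝ) * vm1 + (1/24 : ℝ) * v2 + (1/24 : ℝ) * vm2


namespace Sl2Aux


abbrev G := ↥(sl (Fin 2) ℂ)

lemma entry11 (Z : G) : Z.val 1 1 = - Z.val 0 0 := by
  have h : Matrix.trace Z.val = 0 := Z.2
  rw [Matrix.trace, Fin.sum_univ_two] at h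
  simp [Matrix.diag] at h
  linear_combination h

lemma smul_entry (r : ℝ) (Z : G) (i j : Fin 2) : (r • Z).val i j = (r:ℂ) * Z.val i j := by
  rw [← algebraMap_smul ℂ r Z]; rfl

lemma bracket_entry (Z W : G) (i j : Fin 2) :
    (⁅Z,W⁆ : G).val i j = Z.val i 0 * W.val 0 j + Z.val i 1 * W.val 1 j
      - (W.val i 0 * Z.val 0 j + W.val i 1 * Z.val 1 j) := by
  rw [sl_bracket]
  simp [Matrix.mul_apply, Fin.sum_univ_two]

/-- The real-linear functional on `sl(2,ℂ)` whose kernel is the Borel subalgebra attached to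
the line through `(1, c)`. -/
noncomputable def ell (c : ℂ) : G →ₗ[ℝ] ℂ where
  toFun Z := Z.val 1 0 - 2*c*(Z.val 0 0) - c*c*(Z.val 0 1)
  map_add' Z W := by simp; ring
  map_smul' r Z := by simp [smul_entry, Complex.real_smul]; ring

@[simp] lemma ell_apply (c : ℂ) (Z : G) :
    ell c Z = Z.val 1 0 - 2*c*(Z.val 0 0) - c*c*(Z.val 0 1) := rfl

/-- The Borel-type subalgebra: matrices stabilizing the line through `(1,c)`. -/
noncomputable def borel (c : ℂ) : LieSubalgebra ℝ G :=
  { LinearMap.ker (ell c) with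
    lie_mem' := by
      intro x y hx hy
      have hx' : ell c x = 0 := hx
      have hy' : ell c y = 0 := hy
      show ⁅x, y⁆ ∈ LinearMap.ker (ell c)
      simp only [LinearMap.mem_ker, ell_apply] at hx' hy' ⊢
      rw [bracket_entry, bracket_entry, bracket_entry]
      rw [entry11 x, entry11 y]
      linear_combination (2*(y.val 0 0) + 2*c*(y.val 0 1)) * hx'
        + (-2*(x.val 0 0) - 2*c*(x.val 0 1)) * hy' }

lemma mem_borel {c : ℂ} {Z : G} : Z ∈ borel c ↔ ell c Z = 0 := Iff.rfl


/-- The "diagonal eigenvalue" functional on the Borel subalgebra. -/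
noncomputable def phi (c : ℂ) : ↥(borel c) →ₗ[ℝ] ℂ where
  toFun Z := (Z.val.val 0 0) + c * (Z.val.val 0 1)
  map_add' Z W := by simp; ring
  map_smul' r Z := by
    have h0 : ((r • Z).val : G) = r • (Z.val : G) := rfl
    simp [h0, smul_entry, Complex.real_smul]; ring

@[simp] lemma phi_apply (c : ℂ) (Z : ↥(borel c)) :
    phi c Z = (Z.val.val 0 0) + c * (Z.val.val 0 1) := rfl

lemma coe_bracket_borel (c : ℂ) (x y : ↥(borel c)) :
    ((⁅x, y⁆ : ↥(borel c)) : G) = ⁅(x : G), (y : G)⁆ := rfl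

lemma phi_bracket (c : ℂ) (x y : ↥(borel c)) : phi c ⁅x, y⁆ = 0 := by
  have hx' : ell c x.val = 0 := x.2
  have hy' : ell c y.val = 0 := y.2
  simp only [ell_apply] at hx' hy'
  rw [phi_apply, coe_bracket_borel, bracket_entry, bracket_entry]
  rw [entry11 (x : G), entry11 (y : G)]
  linear_combination (x.val.val 0 1) * hy' + (-(y.val.val 0 1)) * hx'

/-- `ker (phi c)` as a Lie ideal of the Borel. -/
noncomputable def nilK (c : ℂ) : LieIdeal ℝ ↥(borel c) :=
  { LinearMap.ker (phi c) with
    lie_mem := by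
      intro x m _
      exact LinearMap.mem_ker.mpr (phi_bracket c x m) }

lemma mem_nilK {c : ℂ} {Z : ↥(borel c)} : Z ∈ nilK c ↔ phi c Z = 0 := Iff.rfl

lemma nilK_bracket (c : ℂ) (x y : ↥(borel c)) (hx : phi c x = 0) (hy : phi c y = 0) :
    ⁅x, y⁆ = 0 := by
  have hx' : ell c x.val = 0 := x.2
  have hy' : ell c y.val = 0 := y.2
  simp only [ell_apply] at hx' hy'
  simp only [phi_apply] at hx hy
  apply Subtype.ext
  apply Subtype.ext
  show ((⁅x, y⁆ : ↥(borel c)) : G).val = ((0 : ↥(borel c)) : G).val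
  rw [coe_bracket_borel]
  ext i j
  have h0 : ((0 : ↥(borel c)) : G).val i j = 0 := rfl
  rw [h0, bracket_entry]
  have hx1 := entry11 (x : G)
  have hy1 := entry11 (y : G)
  set a0 := ((x : G) : Matrix (Fin 2) (Fin 2) ℂ) 0 0
  set a1 := ((x : G) : Matrix (Fin 2) (Fin 2) ℂ) 0 1
  set a2 := ((x : G) : Matrix (Fin 2) (Fin 2) ℂ) 1 0
  set b0 := ((y : G) : Matrix (Fin 2) (Fin 2) ℂ) 0 0
  set b1 := ((y : G) : Matrix (Fin 2) (Fin 2) ℂ) 0 1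
  set b2 := ((y : G) : Matrix (Fin 2) (Fin 2) ℂ) 1 0
  fin_cases i <;> fin_cases j <;>
    simp only [Fin.zero_eta, Fin.mk_one, Matrix.cons_val_zero, Matrix.cons_val_one]
  · linear_combination a1 * hy' + (-b1) * hx' + (-2*c*b1) * hx + (2*c*a1) * hy
  · linear_combination a1 * hy1 + (-b1) * hx1 + 2*b1 * hx + (-2*a1) * hy
  · linear_combination b2 * hx1 + (-a2) * hy1 + 2*b0 * hx' + (-2*a0) * hy'
      + (2*c*c*a1) * hy + (-2*c*c*b1) * hx
  · linear_combination b1 * hx' + (-a1) * hy' + 2*c*b1 * hx + (-2*c*a1) * hy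

lemma isSolvable_borel (c : ℂ) : LieAlgebra.IsSolvable ↥(borel c) := by
  refine (LieAlgebra.isSolvable_iff ℝ ↥(borel c)).mpr ?_
  have h1 : LieAlgebra.derivedSeries ℝ ↥(borel c) 1 ≤ nilK c := by
    simp only [LieAlgebra.derivedSeries_def, LieAlgebra.derivedSeriesOfIdeal_succ,
      LieAlgebra.derivedSeriesOfIdeal_zero]
    rw [LieSubmodule.lie_le_iff]
    intro x _ m _
    exact mem_nilK.mpr (phi_bracket c x m)
  refine ⟨2, le_bot_iff.mp ?_⟩
  rw [LieAlgebra.derivedSeries_def, LieAlgebra.derivedSeriesOfIdeal_succ]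
  refine le_trans (LieSubmodule.mono_lie h1 h1) ((LieSubmodule.lie_le_iff _ _ _).mpr ?_)
  intro x hx m hm
  rw [LieSubmodule.mem_bot]
  exact nilK_bracket c x m (mem_nilK.mp hx) (mem_nilK.mp hm)

private lemma ratio_real (pi qi : ℂ) (hpi : pi ≠ 0)
    (hii : (starRingEnd ℂ) pi * qi = pi * (starRingEnd ℂ) qi) :
    (((qi/pi).re : ℝ) : ℂ) = qi/pi := by
  rw [← Complex.conj_eq_iff_re, map_div₀]
  rw [div_eq_div_iff ((map_ne_zero (starRingEnd ℂ)).mpr hpi) hpi]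
  linear_combination -hii

private lemma rel_cancel (pi qi pj qj : ℂ) (hpi : pi ≠ 0)
    (hii : (starRingEnd ℂ) pi * qi = pi * (starRingEnd ℂ) qi)
    (hij : (starRingEnd ℂ) pi * qj = pj * (starRingEnd ℂ) qi) :
    qj * pi = pj * qi := by
  have h' : (qj * pi - pj * qi) * (starRingEnd ℂ) pi = 0 := by
    linear_combination pi * hij - pj * hii
  rcases mul_eq_zero.mp h' with h | h
  · exact sub_eq_zero.mp h
  · exact absurd h ((map_ne_zero (starRingEnd ℂ)).mpr hpi)

private lemma dep_aux (X Y : G) (pi qi : ℂ) (hpi : pi ≠ 0)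
    (hr : (((qi/pi).re : ℝ) : ℂ) = qi/pi)
    (h00 : (Y.val 0 0) * pi = (X.val 0 0) * qi)
    (h01 : (Y.val 0 1) * pi = (X.val 0 1) * qi)
    (h10 : (Y.val 1 0) * pi = (X.val 1 0) * qi) :
    Y = ((qi/pi).re) • X := by
  apply Subtype.ext
  ext i j
  rw [smul_entry, hr]
  fin_cases i <;> fin_cases j <;>
    simp only [Fin.zero_eta, Fin.mk_one] <;>
    rw [div_mul_eq_mul_div, eq_div_iff hpi]
  · linear_combination h00
  · linear_combination h01
  · linear_combination h10
  · rw [entry11 Y, entry11 X]; linear_combination -h00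

end Sl2Aux

set_option maxHeartbeats 1000000 in
/-- Every real Lie subalgebra `𝔥` of `sl(2,ℂ)` (viewed as a 6-dimensional
real Lie algebra) with `dim_ℝ 𝔥 ≥ 2` admits a solvable complementary subalgebra, i.e. a
solvable real subalgebra `𝔯` with `𝔥 + 𝔯 = sl(2,ℂ)`. -/
theorem sl2C_real_subalgebra_has_solvable_complement
    (𝔥 : LieSubalgebra ℝ ↥(LieAlgebra.SpecialLinear.sl (Fin 2) ℂ))
    (h2 : 2 ≤ Module.finrank ℝ ↥𝔥) :
    ∃ 𝔯 : LieSubalgebra ℝ ↥(LieAlgebra.SpecialLinear.sl (Fin 2) ℂ),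
      LieAlgebra.IsSolvable ↥𝔯 ∧ 𝔥.toSubmodule ⊔ 𝔯.toSubmodule = ⊤ := by
  classical
  obtain ⟨f, hf⟩ := exists_linearIndependent_of_le_finrank h2
  set X : Sl2Aux.G := ((f 0 : ↥𝔥) : Sl2Aux.G) with hXdef
  set Y : Sl2Aux.G := ((f 1 : ↥𝔥) : Sl2Aux.G) with hYdef
  have hst : ∀ s t : ℝ, s • X + t • Y = 0 → s = 0 ∧ t = 0 := by
    intro s t h
    have h' : s • f 0 + t • f 1 = (0 : ↥𝔥) := by
      apply Subtype.coe_injective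
      simpa using h
    have hsum : ∑ i, (![s, t]) i • f i = 0 := by
      rw [Fin.sum_univ_two]
      simpa using h'
    have := Fintype.linearIndependent_iff.mp hf ![s, t] hsum
    exact ⟨this 0, this 1⟩
  have hex : ∃ c : ℂ,
      ¬ ((starRingEnd ℂ) (-(X.val 1 0) + (2*(X.val 0 0))*c + (X.val 0 1)*(c*c)) * (-(Y.val 1 0) + (2*(Y.val 0 0))*c + (Y.val 0 1)*(c*c))
         = (-(X.val 1 0) + (2*(X.val 0 0))*c + (X.val 0 1)*(c*c)) * (starRingEnd ℂ) (-(Y.val 1 0) + (2*(Y.val 0 0))*c + (Y.val 0 1)*(c*c))) := by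
    by_contra hno
    push_neg at hno
    obtain ⟨e1, e2, e3, e4, e5, e6, e7, e8, e9⟩ := conj_poly_key _ _ _ _ _ _ hno
    have hX0 : ¬ (X = 0) := by
      intro h0
      have := (hst 1 0 (by simp [h0])).1
      norm_num at this
    have hfin : ∀ r : ℝ, Y = r • X → False := by
      intro r hY
      have hcon := (hst r (-1) (by rw [hY, neg_one_smul]; exact add_neg_cancel _)).2
      norm_num at hcon
    by_cases hp0 : -(X.val 1 0) = 0
    · by_cases hp1 : 2*(X.val 0 0) = 0
      · by_cases hp2 : (X.val 0 1) = 0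
        · apply hX0
          apply Subtype.ext
          show X.val = (0 : Matrix (Fin 2) (Fin 2) ℂ)
          ext i j
          fin_cases i <;> fin_cases j <;>
            simp only [Fin.zero_eta, Fin.mk_one, Matrix.zero_apply]
          · linear_combination (1/2 : ℂ) * hp1
          · exact hp2
          · linear_combination -hp0
          · rw [Sl2Aux.entry11 X]; linear_combination (-1/2 : ℂ) * hp1
        · -- pivot p2 = X.val 0 1
          have hr := Sl2Aux.ratio_real _ _ hp2 e9
          have r1 : (Y.val 0 0) * (X.val 0 1) = (X.val 0 0) * (Y.val 0 1) := by
            have := Sl2Aux.rel_cancel _ _ _ _ hp2 e9 e8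
            linear_combination (1/2 : ℂ) * this
          have r2 : (Y.val 0 1) * (X.val 0 1) = (X.val 0 1) * (Y.val 0 1) := by ring
          have r3 : (Y.val 1 0) * (X.val 0 1) = (X.val 1 0) * (Y.val 0 1) := by
            have := Sl2Aux.rel_cancel _ _ _ _ hp2 e9 e7
            linear_combination -this
          exact hfin _ (Sl2Aux.dep_aux X Y _ _ hp2 hr r1 r2 r3)
      · -- pivot p1 = 2*X.val 0 0
        have hr := Sl2Aux.ratio_real _ _ hp1 e5
        have r1 : (Y.val 0 0) * (2*(X.val 0 0)) = (X.val 0 0) * (2*(Y.val 0 0)) := by ring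
        have r2 : (Y.val 0 1) * (2*(X.val 0 0)) = (X.val 0 1) * (2*(Y.val 0 0)) := by
          have := Sl2Aux.rel_cancel _ _ _ _ hp1 e5 e6
          linear_combination this
        have r3 : (Y.val 1 0) * (2*(X.val 0 0)) = (X.val 1 0) * (2*(Y.val 0 0)) := by
          have := Sl2Aux.rel_cancel _ _ _ _ hp1 e5 e4
          linear_combination -this
        exact hfin _ (Sl2Aux.dep_aux X Y _ _ hp1 hr r1 r2 r3)
    · -- pivot p0 = -(X.val 1 0)
      have hr := Sl2Aux.ratio_real _ _ hp0 e1
      have r1 : (Y.val 0 0) * (-(X.val 1 0)) = (X.val 0 0) * (-(Y.val 1 0)) := by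
        have := Sl2Aux.rel_cancel _ _ _ _ hp0 e1 e2
        linear_combination (1/2 : ℂ) * this
      have r2 : (Y.val 0 1) * (-(X.val 1 0)) = (X.val 0 1) * (-(Y.val 1 0)) := by
        have := Sl2Aux.rel_cancel _ _ _ _ hp0 e1 e3
        linear_combination this
      have r3 : (Y.val 1 0) * (-(X.val 1 0)) = (X.val 1 0) * (-(Y.val 1 0)) := by ring
      exact hfin _ (Sl2Aux.dep_aux X Y _ _ hp0 hr r1 r2 r3)
  obtain ⟨c, hc⟩ := hex
  refine ⟨Sl2Aux.borel c, Sl2Aux.isSolvable_borel c, ?_⟩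
  rw [eq_top_iff]
  rintro Z -
  have hu : Sl2Aux.ell c X = -(-(X.val 1 0) + (2*(X.val 0 0))*c + (X.val 0 1)*(c*c)) := by
    rw [Sl2Aux.ell_apply]; ring
  have hv : Sl2Aux.ell c Y = -(-(Y.val 1 0) + (2*(Y.val 0 0))*c + (Y.val 0 1)*(c*c)) := by
    rw [Sl2Aux.ell_apply]; ring
  have hden : ((starRingEnd ℂ) (Sl2Aux.ell c X) * (Sl2Aux.ell c Y) - (Sl2Aux.ell c X) * (starRingEnd ℂ) (Sl2Aux.ell c Y)) ≠ 0 := by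
    rw [hu, hv, map_neg, map_neg]
    intro h
    apply hc
    linear_combination h
  have hden2 : ((Sl2Aux.ell c X) * (starRingEnd ℂ) (Sl2Aux.ell c Y) - (starRingEnd ℂ) (Sl2Aux.ell c X) * (Sl2Aux.ell c Y)) ≠ 0 := by
    intro h
    apply hden
    linear_combination -h
  have hs1conj : (starRingEnd ℂ) (((starRingEnd ℂ) (Sl2Aux.ell c Z) * (Sl2Aux.ell c Y) - (Sl2Aux.ell c Z) * (starRingEnd ℂ) (Sl2Aux.ell c Y)) / ((starRingEnd ℂ) (Sl2Aux.ell c X) * (Sl2Aux.ell c Y) - (Sl2Aux.ell c X) * (starRingEnd ℂ) (Sl2Aux.ell c Y))) = ((starRingEnd ℂ) (Sl2Aux.ell c Z) * (Sl2Aux.ell c Y) - (Sl2Aux.ell c Z) * (starRingEnd ℂ) (Sl2Aux.ell c Y)) / ((starRingEnd ℂ) (Sl2Aux.ell c X) * (Sl2Aux.ell c Y) - (Sl2Aux.ell c X) * (starRingEnd ℂ) (Sl2Aux.ell c Y)) := by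
    rw [map_div₀, map_sub, map_sub, map_mul, map_mul, map_mul, map_mul, Complex.conj_conj,
      Complex.conj_conj, Complex.conj_conj]
    rw [div_eq_div_iff hden2 hden]
    ring
  have ht1conj : (starRingEnd ℂ) (((Sl2Aux.ell c Z) * (starRingEnd ℂ) (Sl2Aux.ell c X) - (starRingEnd ℂ) (Sl2Aux.ell c Z) * (Sl2Aux.ell c X)) / ((starRingEnd ℂ) (Sl2Aux.ell c X) * (Sl2Aux.ell c Y) - (Sl2Aux.ell c X) * (starRingEnd ℂ) (Sl2Aux.ell c Y))) = ((Sl2Aux.ell c Z) * (starRingEnd ℂ) (Sl2Aux.ell c X) - (starRingEnd ℂ) (Sl2Aux.ell c Z) * (Sl2Aux.ell c X)) / ((starRingEnd ℂ) (Sl2Aux.ell c X) * (Sl2Aux.ell c Y) - (Sl2Aux.ell c X) * (starRingEnd ℂ) (Sl2Aux.ell c Y)) := by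
    rw [map_div₀, map_sub, map_sub, map_mul, map_mul, map_mul, map_mul, Complex.conj_conj,
      Complex.conj_conj, Complex.conj_conj]
    rw [div_eq_div_iff hden2 hden]
    ring
  have hs1r := Complex.conj_eq_iff_re.mp hs1conj
  have ht1r := Complex.conj_eq_iff_re.mp ht1conj
  have hlin : (((starRingEnd ℂ) (Sl2Aux.ell c Z) * (Sl2Aux.ell c Y) - (Sl2Aux.ell c Z) * (starRingEnd ℂ) (Sl2Aux.ell c Y)) / ((starRingEnd ℂ) (Sl2Aux.ell c X) * (Sl2Aux.ell c Y) - (Sl2Aux.ell c X) * (starRingEnd ℂ) (Sl2Aux.ell c Y))) * (Sl2Aux.ell c X) + (((Sl2Aux.ell c Z) * (starRingEnd ℂ) (Sl2Aux.ell c X) - (starRingEnd ℂ) (Sl2Aux.ell c Z) * (Sl2Aux.ell c X)) / ((starRingEnd ℂ) (Sl2Aux.ell c X) * (Sl2Aux.ell c Y) - (Sl2Aux.ell c X) * (starRingEnd ℂ) (Sl2Aux.ell c Y))) * (Sl2Aux.ell c Y) = (Sl2Aux.ell c Z) := by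
    rw [div_mul_eq_mul_div, div_mul_eq_mul_div, ← add_div, div_eq_iff hden]
    ring
  have hWmem : Z - (((starRingEnd ℂ) (Sl2Aux.ell c Z) * (Sl2Aux.ell c Y) - (Sl2Aux.ell c Z) * (starRingEnd ℂ) (Sl2Aux.ell c Y)) / ((starRingEnd ℂ) (Sl2Aux.ell c X) * (Sl2Aux.ell c Y) - (Sl2Aux.ell c X) * (starRingEnd ℂ) (Sl2Aux.ell c Y))).re • X - (((Sl2Aux.ell c Z) * (starRingEnd ℂ) (Sl2Aux.ell c X) - (starRingEnd ℂ) (Sl2Aux.ell c Z) * (Sl2Aux.ell c X)) / ((starRingEnd ℂ) (Sl2Aux.ell c X) * (Sl2Aux.ell c Y) - (Sl2Aux.ell c X) * (starRingEnd ℂ) (Sl2Aux.ell c Y))).re • Y ∈ Sl2Aux.borel c := by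
    rw [Sl2Aux.mem_borel, map_sub, map_sub, LinearMap.map_smul, LinearMap.map_smul,
      Complex.real_smul, Complex.real_smul, hs1r, ht1r]
    linear_combination -hlin
  have hZeq : Z = ((((starRingEnd ℂ) (Sl2Aux.ell c Z) * (Sl2Aux.ell c Y) - (Sl2Aux.ell c Z) * (starRingEnd ℂ) (Sl2Aux.ell c Y)) / ((starRingEnd ℂ) (Sl2Aux.ell c X) * (Sl2Aux.ell c Y) - (Sl2Aux.ell c X) * (starRingEnd ℂ) (Sl2Aux.ell c Y))).re • X + (((Sl2Aux.ell c Z) * (starRingEnd ℂ) (Sl2Aux.ell c X) - (starRingEnd ℂ) (Sl2Aux.ell c Z) * (Sl2Aux.ell c X)) / ((starRingEnd ℂ) (Sl2Aux.ell c X) * (Sl2Aux.ell c Y) - (Sl2Aux.ell c X) * (starRingEnd ℂ) (Sl2Aux.ell c Y))).re • Y)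
      + (Z - (((starRingEnd ℂ) (Sl2Aux.ell c Z) * (Sl2Aux.ell c Y) - (Sl2Aux.ell c Z) * (starRingEnd ℂ) (Sl2Aux.ell c Y)) / ((starRingEnd ℂ) (Sl2Aux.ell c X) * (Sl2Aux.ell c Y) - (Sl2Aux.ell c X) * (starRingEnd ℂ) (Sl2Aux.ell c Y))).re • X - (((Sl2Aux.ell c Z) * (starRingEnd ℂ) (Sl2Aux.ell c X) - (starRingEnd ℂ) (Sl2Aux.ell c Z) * (Sl2Aux.ell c X)) / ((starRingEnd ℂ) (Sl2Aux.ell c X) * (Sl2Aux.ell c Y) - (Sl2Aux.ell c X) * (starRingEnd ℂ) (Sl2Aux.ell c Y))).re • Y) := by abel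
  rw [hZeq]
  refine Submodule.add_mem _ (Submodule.mem_sup_left ?_) (Submodule.mem_sup_right ?_)
  · exact Submodule.add_mem _
      (Submodule.smul_mem _ _ ((LieSubalgebra.mem_toSubmodule (L' := _)).mpr (f 0).2))
      (Submodule.smul_mem _ _ ((LieSubalgebra.mem_toSubmodule (L' := _)).mpr (f 1).2))
  · exact (LieSubalgebra.mem_toSubmodule (L' := _)).mpr hWmem
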